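/- Let P ⊆ ℝ₊ × ℝ₊ be a finite Pareto frontier (an antichain under weak dominance, listed in strictly increasing first coordinate and strictly decreasing second coordinate as p₁, ..., pₙ). For any ε > 0 there exists a subset Q ⊆ P of size at most ⌈log_{1+ε}(p_n.1 / p₁.1)⌉ + 1 such that every element of P is (ε,0)-dominated by some element of Q, i.e., for each p ∈ P there is q ∈ Q with q.1 ≤ (1+ε)·p.1 and q.2 ≤ p.2. -/
import Mathlib


/-- a finite Pareto frontier admits an (ε,0)-approximating
subset of logarithmic size. -/
theorem exists_small_approx_subset
    (n : ℕ) (p : Fin (n + 1) → ℝ × ℝ)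
    (hpos1 : ∀ i, 0 < (p i).1) (hpos2 : ∀ i, 0 < (p i).2)
    (hmono : StrictMono fun i => (p i).1)
    (hanti : StrictAnti fun i => (p i).2)
    (ε : ℝ) (hε : 0 < ε) :
    ∃ Q : Finset (Fin (n + 1)),
      (Q.card : ℤ) ≤ ⌈Real.logb (1 + ε) ((p (Fin.last n)).1 / (p 0).1)⌉ + 1 ∧
      ∀ i, ∃ j ∈ Q, (p j).1 ≤ (1 + ε) * (p i).1 ∧ (p j).2 ≤ (p i).2 := by
  have hbase : (1 : ℝ) < 1 + ε := by linarith
  set b : Fin (n + 1) → ℤ :=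
    fun i => ⌈Real.logb (1 + ε) ((p i).1 / (p 0).1)⌉ with hbdef
  have hne : ∀ i : Fin (n + 1),
      (Finset.univ.filter (fun j => b j = b i)).Nonempty :=
    fun i => ⟨i, by simp⟩
  set f : Fin (n + 1) → Fin (n + 1) :=
    fun i => (Finset.univ.filter (fun j => b j = b i)).max' (hne i) with hfdef
  have hfmem : ∀ i, b (f i) = b i := by
    intro i
    have := Finset.max'_mem _ (hne i)
    simpa using this
  have hfge : ∀ i, i ≤ f i := by
    intro i
    exact Finset.le_max' _ i (by simp)
  have hratio1 : ∀ i, (1 : ℝ) ≤ (p i).1 / (p 0).1 := by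
    intro i
    rw [le_div_iff₀ (hpos1 0)]
    simpa using (hmono.monotone (Fin.zero_le i))
  have hbnonneg : ∀ i, 0 ≤ b i := by
    intro i
    exact Int.ceil_nonneg (Real.logb_nonneg hbase (hratio1 i))
  have hble : ∀ i, b i ≤ b (Fin.last n) := by
    intro i
    apply Int.ceil_le_ceil
    apply Real.logb_le_logb_of_le hbase (div_pos (hpos1 i) (hpos1 0))
    exact div_le_div_of_nonneg_right (hmono.monotone (Fin.le_last i)) (le_of_lt (hpos1 0))
  refine ⟨Finset.image f Finset.univ, ?_, ?_⟩
  · have hinj : Set.InjOn b (Finset.image f Finset.univ : Finset (Fin (n+1))) := by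
      intro x hx y hy hxy
      simp only [Finset.coe_image, Finset.coe_univ, Set.image_univ, Set.mem_range] at hx hy
      obtain ⟨i, rfl⟩ := hx
      obtain ⟨j, rfl⟩ := hy
      have : (fun k => b k = b i) = (fun k => b k = b j) := by
        funext k
        rw [← hfmem i, ← hfmem j, hxy]
      simp only [hfdef]
      congr 1
      exact Finset.filter_congr (fun k _ => by exact iff_of_eq (congrFun this k))
    have h1 : (Finset.image f Finset.univ).card
        = (Finset.image b (Finset.image f Finset.univ)).card :=
      (Finset.card_image_of_injOn hinj).symm
    have h2 : Finset.image b (Finset.image f Finset.univ)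
        ⊆ Finset.Icc 0 (b (Fin.last n)) := by
      intro c hc
      simp only [Finset.mem_image] at hc
      obtain ⟨j, _, rfl⟩ := hc
      exact Finset.mem_Icc.mpr ⟨hbnonneg j, hble j⟩
    have h3 := Finset.card_le_card h2
    have h4 : (Finset.Icc (0 : ℤ) (b (Fin.last n))).card
        = (b (Fin.last n) + 1).toNat := by
      rw [Int.card_Icc]; ring_nf
    have h5 : ((b (Fin.last n) + 1).toNat : ℤ) = b (Fin.last n) + 1 := by
      rw [Int.toNat_of_nonneg]; linarith [hbnonneg (Fin.last n)]
    have := h1 ▸ h3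
    calc ((Finset.image f Finset.univ).card : ℤ)
        = ((Finset.image b (Finset.image f Finset.univ)).card : ℤ) := by
          exact_mod_cast congrArg Nat.cast h1
      _ ≤ ((Finset.Icc (0 : ℤ) (b (Fin.last n))).card : ℤ) := by exact_mod_cast h3
      _ = b (Fin.last n) + 1 := by rw [h4, h5]
  · intro i
    refine ⟨f i, Finset.mem_image.mpr ⟨i, Finset.mem_univ i, rfl⟩, ?_, ?_⟩
    · -- first coordinate
      have hceil_le : Real.logb (1 + ε) ((p (f i)).1 / (p 0).1) ≤ (b i : ℝ) := by
        rw [← hfmem i]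
        exact Int.le_ceil _
      have h1 : (p (f i)).1 / (p 0).1 ≤ (1 + ε) ^ ((b i : ℝ)) :=
        (Real.logb_le_iff_le_rpow hbase (div_pos (hpos1 (f i)) (hpos1 0))).mp hceil_le
      have h2 : ((b i : ℝ) - 1) < Real.logb (1 + ε) ((p i).1 / (p 0).1) := by
        have := Int.ceil_lt_add_one (Real.logb (1 + ε) ((p i).1 / (p 0).1))
        have hb' : (b i : ℝ) = ↑⌈Real.logb (1 + ε) ((p i).1 / (p 0).1)⌉ := rfl
        rw [hb']
        linarith
      have h3 : (1 + ε) ^ ((b i : ℝ) - 1) < (p i).1 / (p 0).1 := by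
        rw [← Real.lt_logb_iff_rpow_lt hbase (div_pos (hpos1 i) (hpos1 0))]
        exact h2
      have h4 : (1 + ε) ^ ((b i : ℝ)) = (1 + ε) ^ ((b i : ℝ) - 1) * (1 + ε) := by
        rw [← Real.rpow_add_one (by linarith : (1 : ℝ) + ε ≠ 0)]
        ring_nf
      have h5 : (p (f i)).1 / (p 0).1 < (1 + ε) * ((p i).1 / (p 0).1) := by
        calc (p (f i)).1 / (p 0).1 ≤ (1 + ε) ^ ((b i : ℝ)) := h1
          _ = (1 + ε) ^ ((b i : ℝ) - 1) * (1 + ε) := h4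
          _ < ((p i).1 / (p 0).1) * (1 + ε) := by
              apply mul_lt_mul_of_pos_right h3 (by linarith)
          _ = (1 + ε) * ((p i).1 / (p 0).1) := by ring
      have h6 := mul_lt_mul_of_pos_right h5 (hpos1 0)
      rw [div_mul_cancel₀ _ (ne_of_gt (hpos1 0))] at h6
      have heq : (1 + ε) * ((p i).1 / (p 0).1) * (p 0).1 = (1 + ε) * (p i).1 := by
        rw [mul_assoc, div_mul_cancel₀ _ (ne_of_gt (hpos1 0))]
      linarith [heq ▸ h6]
    · exact hanti.antitone (hfge i)
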